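/- Let 𝓜₁, 𝓜₂ be bounded subsets of M_n(ℝ) and assume that the switched system (Σ_{𝓜₁}) is uniformly stable. For ν > 0, let 𝓜₂^ν = { M − ν·Id_n : M ∈ 𝓜₂ } and 𝓜 = 𝓜₁ ∪ 𝓜₂^ν. Then there exists ν₀ > 0 such that for every ν ≥ ν₀ the switched system (Σ_𝓜) is uniformly stable. -/

import Mathlib

open MeasureTheory Set
open scoped RealInnerProductSpace

noncomputable section

attribute [local instance] Matrix.normedAddCommGroup Matrix.normedSpace

local instance matrixMeasurableSpace {n : ℕ} :
    MeasurableSpace (Matrix (Fin n) (Fin n) ℝ) :=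
  inferInstanceAs (MeasurableSpace (Fin n → Fin n → ℝ))

/-- The space of `n × n` real matrices. -/
abbrev Mat (n : ℕ) := Matrix (Fin n) (Fin n) ℝ

/-- The state space `ℝⁿ` with its Euclidean structure. -/
abbrev Vec (n : ℕ) := EuclideanSpace ℝ (Fin n)

/-- Action of a matrix on a vector of Euclidean space. -/
def Mat.act {n : ℕ} (M : Mat n) (x : Vec n) : Vec n := Matrix.toEuclideanLin M x

/-- A switching law for the switched system `(Σ_𝓜)`: a measurable function taking values in `𝓜`. -/
def IsSwitchingLaw {n : ℕ} (𝓜 : Set (Mat n)) (A : ℝ → Mat n) : Prop :=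
  Measurable A ∧ ∀ t, 0 ≤ t → A t ∈ 𝓜

/-- `Φ` is the fundamental matrix `t ↦ Φ_A(t,0)` of the switching law `A`: the continuous
solution on `[0,∞)` of `Φ(t) = Id + ∫₀ᵗ A(s) Φ(s) ds`. -/
def IsFundamentalMatrix {n : ℕ} (A : ℝ → Mat n) (Φ : ℝ → Mat n) : Prop :=
  ContinuousOn Φ (Ici (0:ℝ)) ∧
  ∀ t, 0 ≤ t → Φ t = 1 + ∫ s in (0:ℝ)..t, A s * Φ s

/-- Uniform stability of the switched system `(Σ_𝓜)`. -/
def UniformlyStable {n : ℕ} (𝓜 : Set (Mat n)) : Prop :=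
  ∃ C > 0, ∀ A Φ : ℝ → Mat n, IsSwitchingLaw 𝓜 A → IsFundamentalMatrix A Φ →
    ∀ t, 0 ≤ t → ‖Φ t‖ ≤ C

/-- Uniform exponential stability of the switched system `(Σ_𝓜)`. -/
def UniformlyExpStable {n : ℕ} (𝓜 : Set (Mat n)) : Prop :=
  ∃ C > 0, ∃ γ > 0, ∀ A Φ : ℝ → Mat n, IsSwitchingLaw 𝓜 A → IsFundamentalMatrix A Φ →
    ∀ t, 0 ≤ t → ‖Φ t‖ ≤ C * Real.exp (-γ * t)

/-- A nonstrict common Lyapunov function for `(Σ_𝓜)`: continuous, nonnegative, positive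
definite, and non-increasing along every trajectory. -/
def IsNonstrictCLF {n : ℕ} (𝓜 : Set (Mat n)) (V : Vec n → ℝ) : Prop :=
  Continuous V ∧ (∀ x, 0 ≤ V x) ∧ V 0 = 0 ∧ (∀ x, x ≠ 0 → 0 < V x) ∧
  ∀ A Φ : ℝ → Mat n, IsSwitchingLaw 𝓜 A → IsFundamentalMatrix A Φ → ∀ x₀ : Vec n,
    AntitoneOn (fun t => V ((Φ t).act x₀)) (Ici 0)

/-- A (strict) common Lyapunov function for `(Σ_𝓜)`: a nonstrict one that is moreover
strictly decreasing along every nonzero trajectory. -/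
def IsCLF {n : ℕ} (𝓜 : Set (Mat n)) (V : Vec n → ℝ) : Prop :=
  IsNonstrictCLF 𝓜 V ∧
  ∀ A Φ : ℝ → Mat n, IsSwitchingLaw 𝓜 A → IsFundamentalMatrix A Φ → ∀ x₀ : Vec n, x₀ ≠ 0 →
    StrictAntiOn (fun t => V ((Φ t).act x₀)) (Ici 0)

/-- A universal class of Lyapunov functions. -/
def IsUniversalClass {n : ℕ} (P : Set (Vec n → ℝ)) : Prop :=
  ∀ 𝓜 : Set (Mat n), Bornology.IsBounded 𝓜 → UniformlyExpStable 𝓜 →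
    ∃ V ∈ P, IsCLF 𝓜 V

/-- `V` is absolutely homogeneous of degree `α`. -/
def AbsHomog {n : ℕ} (α : ℝ) (V : Vec n → ℝ) : Prop :=
  ∀ (lam : ℝ) (x : Vec n), V (lam • x) = |lam| ^ α * V x

/-- The subdifferential of a convex function. -/
def subdiff {n : ℕ} (V : Vec n → ℝ) (x : Vec n) : Set (Vec n) :=
  {l | ∀ y, ⟪l, y - x⟫ ≤ V y - V x}


namespace Aux
variable {n : ℕ}

local instance : BorelSpace (Mat n) := inferInstanceAs (BorelSpace (Fin n → Fin n → ℝ))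

local instance : ContinuousENorm (Mat n) := @SeminormedAddGroup.toContinuousENorm (Mat n) _
local instance : ENormedAddMonoid (Mat n) := @NormedAddGroup.toENormedAddMonoid (Mat n) _
local instance : ENormedAddCommMonoid (Mat n) := @NormedAddCommGroup.toENormedAddCommMonoid (Mat n) _
local instance : TopologicalSpace.PseudoMetrizableSpace (Mat n) := @PseudoEMetricSpace.pseudoMetrizableSpace (Mat n) _
local instance : SecondCountableTopology (Mat n) := inferInstanceAs (SecondCountableTopology (Fin n → Fin n → ℝ))





lemma act_mul (M N : Mat n) (x : Vec n) : Mat.act (M * N) x = Mat.act M (Mat.act N x) := by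
  simp [Mat.act, Matrix.toEuclideanLin_apply, Matrix.mulVec_mulVec]

lemma act_one (x : Vec n) : Mat.act (1 : Mat n) x = x := by
  simp [Mat.act, Matrix.toEuclideanLin_apply]

lemma act_add (M N : Mat n) (x : Vec n) : Mat.act (M + N) x = Mat.act M x + Mat.act N x := by
  simp [Mat.act]

lemma act_sub (M N : Mat n) (x : Vec n) : Mat.act (M - N) x = Mat.act M x - Mat.act N x := by
  simp [Mat.act]

lemma act_smul (c : ℝ) (M : Mat n) (x : Vec n) : Mat.act (c • M) x = c • Mat.act M x := by
  simp [Mat.act]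

lemma act_apply (M : Mat n) (x : Vec n) (i : Fin n) :
    Mat.act M x i = ∑ j, M i j * x j := by
  simp [Mat.act, Matrix.toEuclideanLin_apply, Matrix.mulVec, dotProduct]

lemma norm_coord (x : Vec n) (i : Fin n) : ‖x i‖ ≤ ‖x‖ := by
  rw [EuclideanSpace.norm_eq]
  calc ‖x i‖ = Real.sqrt (‖x i‖^2) := by rw [Real.sqrt_sq (norm_nonneg _)]
    _ ≤ Real.sqrt (∑ j, ‖x j‖^2) := by
        apply Real.sqrt_le_sqrt
        exact Finset.single_le_sum (fun j _ => sq_nonneg ‖x j‖) (Finset.mem_univ i)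

lemma norm_act_le (M : Mat n) (x : Vec n) : ‖Mat.act M x‖ ≤ (n:ℝ)^2 * ‖M‖ * ‖x‖ := by
  have hcoord : ∀ i, ‖Mat.act M x i‖ ≤ (n:ℝ) * ‖M‖ * ‖x‖ := by
    intro i
    rw [act_apply]
    calc ‖∑ j, M i j * x j‖ ≤ ∑ j, ‖M i j * x j‖ := norm_sum_le _ _
      _ ≤ ∑ _j : Fin n, ‖M‖ * ‖x‖ := by
          apply Finset.sum_le_sum; intro j _
          rw [norm_mul]
          exact mul_le_mul (Matrix.norm_entry_le_entrywise_sup_norm M) (norm_coord x j)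
            (norm_nonneg _) (norm_nonneg _)
      _ = (n:ℝ) * ‖M‖ * ‖x‖ := by simp [Finset.sum_const, mul_assoc]
  rw [EuclideanSpace.norm_eq]
  have h1 : ∑ i, ‖Mat.act M x i‖^2 ≤ (n:ℝ) * ((n:ℝ) * ‖M‖ * ‖x‖)^2 := by
    calc ∑ i, ‖Mat.act M x i‖^2 ≤ ∑ _i : Fin n, ((n:ℝ) * ‖M‖ * ‖x‖)^2 := by
          apply Finset.sum_le_sum; intro i _
          exact pow_le_pow_left₀ (norm_nonneg _) (hcoord i) 2
      _ = (n:ℝ) * ((n:ℝ) * ‖M‖ * ‖x‖)^2 := by simp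
  calc Real.sqrt (∑ i, ‖Mat.act M x i‖^2) ≤ Real.sqrt ((n:ℝ) * ((n:ℝ) * ‖M‖ * ‖x‖)^2) :=
        Real.sqrt_le_sqrt h1
    _ = Real.sqrt n * ((n:ℝ) * ‖M‖ * ‖x‖) := by
        rw [Real.sqrt_mul (by positivity), Real.sqrt_sq (by positivity)]
    _ ≤ (n:ℝ) * ((n:ℝ) * ‖M‖ * ‖x‖) := by
        apply mul_le_mul_of_nonneg_right _ (by positivity)
        calc Real.sqrt n ≤ Real.sqrt ((n:ℝ)^2) := by
              apply Real.sqrt_le_sqrt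
              have : (n:ℕ) ≤ n^2 := Nat.le_self_pow two_ne_zero n
              exact_mod_cast this
          _ = (n:ℝ) := Real.sqrt_sq (by positivity)
    _ = (n:ℝ)^2 * ‖M‖ * ‖x‖ := by ring

lemma norm_mul_le' (M N : Mat n) : ‖M * N‖ ≤ (n:ℝ) * ‖M‖ * ‖N‖ := by
  apply (Matrix.norm_le_iff (by positivity)).2
  intro i j
  calc ‖(M * N) i j‖ = ‖∑ k, M i k * N k j‖ := by simp [Matrix.mul_apply]
    _ ≤ ∑ k, ‖M i k * N k j‖ := norm_sum_le _ _
    _ ≤ ∑ _k : Fin n, ‖M‖ * ‖N‖ := by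
        apply Finset.sum_le_sum; intro k _
        rw [norm_mul]
        exact mul_le_mul (Matrix.norm_entry_le_entrywise_sup_norm M)
          (Matrix.norm_entry_le_entrywise_sup_norm N) (norm_nonneg _) (norm_nonneg _)
    _ = (n:ℝ) * ‖M‖ * ‖N‖ := by simp [mul_assoc]




lemma norm_one_le : ‖(1 : Mat n)‖ ≤ 1 := by
  apply (Matrix.norm_le_iff zero_le_one).2
  intro i j
  by_cases h : i = j <;> simp [Matrix.one_apply, h]

lemma norm_pow_le (M : Mat n) (k : ℕ) : ‖M ^ k‖ ≤ ((n:ℝ) * ‖M‖) ^ k := by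
  induction k with
  | zero => simpa using norm_one_le
  | succ k ih =>
    calc ‖M ^ (k+1)‖ = ‖M * M ^ k‖ := by rw [pow_succ']
      _ ≤ (n:ℝ) * ‖M‖ * ‖M ^ k‖ := norm_mul_le' _ _
      _ ≤ (n:ℝ) * ‖M‖ * ((n:ℝ) * ‖M‖) ^ k := by
          apply mul_le_mul_of_nonneg_left ih (by positivity)
      _ = ((n:ℝ) * ‖M‖) ^ (k+1) := by ring

/-- matrix exponential-type series -/
def ser (M : Mat n) (t : ℝ) : Mat n := ∑' k : ℕ, (t ^ k / k.factorial) • M ^ k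

lemma ser_norm_term (M : Mat n) (t : ℝ) (k : ℕ) :
    ‖(t ^ k / k.factorial : ℝ) • M ^ k‖ ≤ (|t| * ((n:ℝ) * ‖M‖)) ^ k / k.factorial := by
  rw [norm_smul]
  calc ‖(t ^ k / k.factorial : ℝ)‖ * ‖M ^ k‖ ≤ (|t| ^ k / k.factorial) * ((n:ℝ) * ‖M‖)^k := by
        apply mul_le_mul _ (norm_pow_le M k) (norm_nonneg _) (by positivity)
        rw [Real.norm_eq_abs, abs_div, abs_pow]
        simp [Nat.abs_cast]
    _ = (|t| * ((n:ℝ) * ‖M‖)) ^ k / k.factorial := by rw [mul_pow]; ring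

lemma ser_summable (M : Mat n) (t : ℝ) :
    Summable (fun k : ℕ => (t ^ k / k.factorial : ℝ) • M ^ k) := by
  apply Summable.of_norm_bounded (Real.summable_pow_div_factorial (|t| * ((n:ℝ) * ‖M‖)))
  exact ser_norm_term M t

lemma ser_continuous (M : Mat n) : Continuous (ser M) := by
  rw [continuous_iff_continuousAt]
  intro t
  have h := continuousOn_tsum (f := fun (k:ℕ) (s:ℝ) => (s ^ k / k.factorial : ℝ) • M ^ k)
    (s := Icc (t-1) (t+1))
    (u := fun k => ((|t|+1) * ((n:ℝ) * ‖M‖)) ^ k / k.factorial)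
    (fun k => (Continuous.continuousOn (by fun_prop)))
    (Real.summable_pow_div_factorial _) ?_
  · exact (h.continuousAt (Icc_mem_nhds (by linarith) (by linarith))).congr
      (Filter.Eventually.of_forall fun s => rfl)
  · intro k s hs
    refine (ser_norm_term M s k).trans ?_
    have hs' : |s| ≤ |t| + 1 := by
      rw [abs_le]
      constructor
      · nlinarith [hs.1, neg_abs_le t]
      · nlinarith [hs.2, le_abs_self t]
    have hpow : (|s| * ((n:ℝ) * ‖M‖))^k ≤ ((|t|+1) * ((n:ℝ) * ‖M‖))^k := by
      apply pow_le_pow_left₀ (by positivity)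
      exact mul_le_mul_of_nonneg_right hs' (by positivity)
    have hfac : (0:ℝ) < k.factorial := by exact_mod_cast Nat.factorial_pos k
    exact (div_le_div_iff_of_pos_right hfac).2 hpow


/-- left-multiplication as a continuous linear map -/
def mulL (M : Mat n) : Mat n →L[ℝ] Mat n :=
  LinearMap.toContinuousLinearMap (LinearMap.mulLeft ℝ M)

@[simp] lemma mulL_apply (M X : Mat n) : mulL M X = M * X := rfl

/-- right-multiplication as a continuous linear map -/
def mulR (M : Mat n) : Mat n →L[ℝ] Mat n :=
  LinearMap.toContinuousLinearMap ((LinearMap.mulRight ℝ M))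

@[simp] lemma mulR_apply (M X : Mat n) : mulR M X = X * M := rfl

lemma ser_integral_eq (M : Mat n) (t : ℝ) (ht : 0 ≤ t) :
    ser M t = 1 + ∫ s in (0:ℝ)..t, M * ser M s := by
  set β : ℝ := (n:ℝ) * ‖M‖ with hβ
  have hβ0 : 0 ≤ β := by positivity
  have hmul : ∀ s : ℝ, M * ser M s = ∑' k : ℕ, (s ^ k / k.factorial : ℝ) • M ^ (k+1) := by
    intro s
    have h := (mulL M).map_tsum (ser_summable M s)
    have h2 : mulL M (ser M s) = ∑' k : ℕ, mulL M ((s ^ k / k.factorial : ℝ) • M ^ k) := h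
    rw [mulL_apply] at h2
    rw [h2]
    congr 1
    funext k
    rw [_root_.map_smul, mulL_apply, ← pow_succ']
  have hIoc : ∀ k : ℕ, ∫ s in Ioc (0:ℝ) t, ‖(s ^ k / k.factorial : ℝ) • M ^ (k+1)‖
      = (t^(k+1)/(k+1)) * (‖M^(k+1)‖ / k.factorial) := by
    intro k
    have hcongr : ∀ s ∈ Ioc (0:ℝ) t,
        ‖(s ^ k / k.factorial : ℝ) • M ^ (k+1)‖ = s ^ k * (‖M^(k+1)‖ / k.factorial) := by
      intro s hs
      rw [norm_smul, Real.norm_eq_abs, abs_div, abs_pow, abs_of_pos hs.1, Nat.abs_cast]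
      ring
    rw [setIntegral_congr_fun (by measurability) hcongr]
    rw [integral_mul_const, ← intervalIntegral.integral_of_le ht, integral_pow]
    ring
  have hsum2 : Summable (fun k : ℕ =>
      ∫ s in Ioc (0:ℝ) t, ‖(s ^ k / k.factorial : ℝ) • M ^ (k+1)‖) := by
    apply Summable.of_nonneg_of_le (f := fun k : ℕ => (t*β) * ((t*β)^k / k.factorial))
      (fun k => integral_nonneg (fun s => norm_nonneg _))
    · intro k
      rw [hIoc k]
      have h1 : ‖M^(k+1)‖ ≤ β^(k+1) := norm_pow_le M (k+1)
      have h2 : t^(k+1)/((k:ℝ)+1) ≤ t^(k+1) := by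
        apply div_le_self (by positivity)
        linarith [Nat.cast_nonneg (α := ℝ) k]
      calc (t^(k+1)/((k:ℕ)+1:ℝ)) * (‖M^(k+1)‖ / k.factorial)
          ≤ t^(k+1) * (β^(k+1) / k.factorial) := by
            apply mul_le_mul h2 _ (by positivity) (by positivity)
            have hfac : (0:ℝ) ≤ k.factorial := by positivity
            gcongr
        _ = (t*β) * ((t*β)^k / k.factorial) := by rw [mul_pow]; ring
    · exact (Real.summable_pow_div_factorial (t*β)).mul_left (t*β)
  have hint : ∀ k : ℕ, Integrable (fun s => (s ^ k / k.factorial : ℝ) • M ^ (k+1))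
      (volume.restrict (Ioc (0:ℝ) t)) := by
    intro k
    exact (Continuous.integrableOn_Ioc (by fun_prop))
  have key : (∫ s in (0:ℝ)..t, M * ser M s)
      = ∑' k : ℕ, (t^(k+1)/(k+1).factorial : ℝ) • M ^ (k+1) := by
    rw [intervalIntegral.integral_of_le ht]
    have : ∀ᵐ s ∂(volume.restrict (Ioc (0:ℝ) t)), M * ser M s
        = ∑' k : ℕ, (s ^ k / k.factorial : ℝ) • M ^ (k+1) :=
      Filter.Eventually.of_forall hmul
    rw [integral_congr_ae this]
    refine (MeasureTheory.integral_tsum_of_summable_integral_norm hint hsum2).symm.trans ?_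
    congr 1
    funext k
    rw [integral_smul_const, ← intervalIntegral.integral_of_le ht]
    have : (∫ s in (0:ℝ)..t, s ^ k / (k.factorial:ℝ)) = t^(k+1)/(k+1).factorial := by
      rw [intervalIntegral.integral_div, integral_pow]
      rw [Nat.factorial_succ]
      push_cast
      field_simp
      simp
    rw [this]
  rw [key]
  rw [ser, Summable.tsum_eq_zero_add (ser_summable M t)]
  simp



local instance : BorelSpace (Mat n) := inferInstanceAs (BorelSpace (Fin n → Fin n → ℝ))

lemma ser_remainder (M : Mat n) (h : ℝ) (h0 : 0 ≤ h) (h1 : h ≤ 1) :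
    ‖ser M h - 1 - h • M‖ ≤
      h^2 * (((n:ℝ)*‖M‖)^2 * Real.exp ((n:ℝ)*‖M‖)) := by
  set β : ℝ := (n:ℝ) * ‖M‖ with hβ
  have hβ0 : 0 ≤ β := by positivity
  set f : ℕ → Mat n := fun k => (h ^ k / k.factorial : ℝ) • M ^ k with hf
  have hsum : Summable f := ser_summable M h
  have hsum1 : Summable (fun k => f (k + 1)) := (summable_nat_add_iff 1).2 hsum
  have hsum2 : Summable (fun k => f (k + 2)) := (summable_nat_add_iff 2).2 hsum
  have e1 : ser M h = f 0 + ∑' k, f (k + 1) := by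
    rw [ser, Summable.tsum_eq_zero_add hsum]
  have e2 : (∑' k, f (k + 1)) = f 1 + ∑' k, f (k + 2) := by
    rw [Summable.tsum_eq_zero_add hsum1]
  have e3 : ser M h - 1 - h • M = ∑' k, f (k + 2) := by
    rw [e1, e2]
    have hf0 : f 0 = 1 := by simp [hf]
    have hf1 : f 1 = h • M := by simp [hf]
    rw [hf0, hf1]; abel
  rw [e3]
  have hterm : ∀ k : ℕ, ‖f (k + 2)‖ ≤ h^2 * β^2 * (β^k / k.factorial) := by
    intro k
    refine (ser_norm_term M h (k+2)).trans ?_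
    rw [abs_of_nonneg h0, mul_pow]
    have hh : h ^ (k+2) ≤ h^2 := by
      calc h^(k+2) = h^2 * h^k := by ring
        _ ≤ h^2 * 1 := by
            apply mul_le_mul_of_nonneg_left _ (by positivity)
            exact pow_le_one₀ h0 h1
        _ = h^2 := by ring
    have hfac : ((k.factorial : ℝ)) ≤ ((k+2).factorial : ℝ) := by
      exact_mod_cast Nat.factorial_le (by omega)
    calc h^(k+2) * β^(k+2) / (k+2).factorial ≤ h^2 * β^(k+2) / k.factorial := by
          apply div_le_div₀ (by positivity) _ (by exact_mod_cast Nat.factorial_pos k) hfac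
          exact mul_le_mul_of_nonneg_right hh (by positivity)
      _ = h^2 * β^2 * (β^k / k.factorial) := by ring
  have hsumn : Summable (fun k => ‖f (k + 2)‖) := by
    apply Summable.of_nonneg_of_le (fun k => norm_nonneg _) hterm
    apply Summable.mul_left
    exact Real.summable_pow_div_factorial β
  calc ‖∑' k, f (k + 2)‖ ≤ ∑' k, ‖f (k + 2)‖ := norm_tsum_le_tsum_norm hsumn
    _ ≤ ∑' k, h^2 * β^2 * (β^k / k.factorial) := Summable.tsum_le_tsum hterm hsumn (by
        apply Summable.mul_left; exact Real.summable_pow_div_factorial β)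
    _ = h^2 * β^2 * ∑' k, (β^k / k.factorial) := tsum_mul_left
    _ = h^2 * (β^2 * Real.exp β) := by
        rw [Real.exp_eq_exp_ℝ, NormedSpace.exp_eq_tsum_div]
        ring

lemma fm_zero {A Φ : ℝ → Mat n} (hfm : IsFundamentalMatrix A Φ) : Φ 0 = 1 := by
  have := hfm.2 0 le_rfl
  simpa using this

lemma continuousOn_union_closed {E : Type*} [TopologicalSpace E] {f : ℝ → E} {s t : Set ℝ}
    (hs : IsClosed s) (ht : IsClosed t) (hfs : ContinuousOn f s) (hft : ContinuousOn f t) :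
    ContinuousOn f (s ∪ t) := by
  intro x hx
  apply ContinuousWithinAt.union
  · by_cases hxs : x ∈ s
    · exact hfs x hxs
    · exact continuousWithinAt_of_notMem_closure (by rwa [hs.closure_eq])
  · by_cases hxt : x ∈ t
    · exact hft x hxt
    · exact continuousWithinAt_of_notMem_closure (by rwa [ht.closure_eq])

lemma aesm_mul {A Φ : ℝ → Mat n} (hA : Measurable A) {a b : ℝ}
    (hΦ : ContinuousOn Φ (Icc a b)) :
    AEStronglyMeasurable (fun s => A s * Φ s) (volume.restrict (Ioc a b)) := by
  have hΦm : AEStronglyMeasurable Φ (volume.restrict (Ioc a b)) :=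
    (hΦ.mono Ioc_subset_Icc_self).aestronglyMeasurable measurableSet_Ioc
  have hAm : AEStronglyMeasurable A (volume.restrict (Ioc a b)) :=
    hA.aestronglyMeasurable
  have hmul : Continuous (fun p : Mat n × Mat n => p.1 * p.2) :=
    continuous_fst.matrix_mul continuous_snd
  exact hmul.comp_aestronglyMeasurable (hAm.prodMk hΦm)

set_option maxHeartbeats 1000000 in
lemma intervalIntegrable_mul {A Φ : ℝ → Mat n} (hA : Measurable A) {a b K B : ℝ}
    (hab : a ≤ b) (hK : ∀ s ∈ Ioc a b, ‖A s‖ ≤ K) (hΦ : ContinuousOn Φ (Icc a b))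
    (hB : ∀ s ∈ Icc a b, ‖Φ s‖ ≤ B) :
    IntervalIntegrable (fun s => A s * Φ s) volume a b := by
  rw [intervalIntegrable_iff_integrableOn_Ioc_of_le hab]
  refine ⟨aesm_mul hA hΦ, HasFiniteIntegral.restrict_of_bounded (C := (n:ℝ) * K * B)
    measure_Ioc_lt_top ?_⟩
  rw [ae_restrict_iff' measurableSet_Ioc]
  apply Filter.Eventually.of_forall
  intro s hs
  calc ‖A s * Φ s‖ ≤ (n:ℝ) * ‖A s‖ * ‖Φ s‖ := norm_mul_le' _ _
    _ ≤ (n:ℝ) * K * B := by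
        have h1 : ‖A s‖ ≤ K := hK s hs
        have h2 : ‖Φ s‖ ≤ B := hB s (Ioc_subset_Icc_self hs)
        have hK0 : 0 ≤ K := (norm_nonneg _).trans h1
        have : (n:ℝ) * ‖A s‖ ≤ (n:ℝ) * K := by
          apply mul_le_mul_of_nonneg_left h1 (by positivity)
        exact mul_le_mul this h2 (norm_nonneg _) (by positivity)

/-- the value set of the Lyapunov norm -/
def vset (M₁ : Set (Mat n)) (x : Vec n) : Set ℝ :=
  insert ‖x‖ {r | ∃ A Φ : ℝ → Mat n, ∃ t : ℝ, IsSwitchingLaw M₁ A ∧ IsFundamentalMatrix A Φ ∧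
    0 ≤ t ∧ r = ‖Mat.act (Φ t) x‖}

/-- the Lyapunov norm -/
def vv (M₁ : Set (Mat n)) (x : Vec n) : ℝ := sSup (vset M₁ x)

variable {M₁ : Set (Mat n)} {C : ℝ}

lemma vset_bound (hC : ∀ A Φ : ℝ → Mat n, IsSwitchingLaw M₁ A → IsFundamentalMatrix A Φ →
      ∀ t, 0 ≤ t → ‖Φ t‖ ≤ C) (hC0 : 0 ≤ C) (x : Vec n) :
    ∀ r ∈ vset M₁ x, r ≤ ((n:ℝ)^2 * C + 1) * ‖x‖ := by
  intro r hr
  rcases hr with hr | ⟨A, Φ, t, hsw, hfm, ht, rfl⟩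
  · subst hr
    nlinarith [norm_nonneg x, sq_nonneg (n:ℝ), mul_nonneg (mul_nonneg (sq_nonneg (n:ℝ)) hC0) (norm_nonneg x)]
  · calc ‖Mat.act (Φ t) x‖ ≤ (n:ℝ)^2 * ‖Φ t‖ * ‖x‖ := norm_act_le _ _
      _ ≤ ((n:ℝ)^2 * C + 1) * ‖x‖ := by
          have := hC A Φ hsw hfm t ht
          have h2 : (n:ℝ)^2 * ‖Φ t‖ ≤ (n:ℝ)^2 * C + 1 := by nlinarith [sq_nonneg (n:ℝ)]
          exact mul_le_mul_of_nonneg_right h2 (norm_nonneg x) |>.trans_eq' (by ring_nf)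

lemma vset_bdd (hC : ∀ A Φ : ℝ → Mat n, IsSwitchingLaw M₁ A → IsFundamentalMatrix A Φ →
      ∀ t, 0 ≤ t → ‖Φ t‖ ≤ C) (hC0 : 0 ≤ C) (x : Vec n) : BddAbove (vset M₁ x) :=
  ⟨_, vset_bound hC hC0 x⟩

lemma norm_le_vv (hC : ∀ A Φ : ℝ → Mat n, IsSwitchingLaw M₁ A → IsFundamentalMatrix A Φ →
      ∀ t, 0 ≤ t → ‖Φ t‖ ≤ C) (hC0 : 0 ≤ C) (x : Vec n) : ‖x‖ ≤ vv M₁ x :=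
  le_csSup (vset_bdd hC hC0 x) (mem_insert _ _)

lemma vv_le (hC : ∀ A Φ : ℝ → Mat n, IsSwitchingLaw M₁ A → IsFundamentalMatrix A Φ →
      ∀ t, 0 ≤ t → ‖Φ t‖ ≤ C) (hC0 : 0 ≤ C) (x : Vec n) :
    vv M₁ x ≤ ((n:ℝ)^2 * C + 1) * ‖x‖ :=
  csSup_le ⟨‖x‖, mem_insert _ _⟩ (vset_bound hC hC0 x)

lemma vv_nonneg (hC : ∀ A Φ : ℝ → Mat n, IsSwitchingLaw M₁ A → IsFundamentalMatrix A Φ →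
      ∀ t, 0 ≤ t → ‖Φ t‖ ≤ C) (hC0 : 0 ≤ C) (x : Vec n) : 0 ≤ vv M₁ x :=
  (norm_nonneg x).trans (norm_le_vv hC hC0 x)

lemma mem_traj_le_vv (hC : ∀ A Φ : ℝ → Mat n, IsSwitchingLaw M₁ A → IsFundamentalMatrix A Φ →
      ∀ t, 0 ≤ t → ‖Φ t‖ ≤ C) (hC0 : 0 ≤ C) (x : Vec n)
    {A Φ : ℝ → Mat n} (hsw : IsSwitchingLaw M₁ A) (hfm : IsFundamentalMatrix A Φ)
    {t : ℝ} (ht : 0 ≤ t) : ‖Mat.act (Φ t) x‖ ≤ vv M₁ x :=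
  le_csSup (vset_bdd hC hC0 x) (Or.inr ⟨A, Φ, t, hsw, hfm, ht, rfl⟩)

lemma vv_add (hC : ∀ A Φ : ℝ → Mat n, IsSwitchingLaw M₁ A → IsFundamentalMatrix A Φ →
      ∀ t, 0 ≤ t → ‖Φ t‖ ≤ C) (hC0 : 0 ≤ C) (x y : Vec n) :
    vv M₁ (x + y) ≤ vv M₁ x + vv M₁ y := by
  apply csSup_le ⟨‖x + y‖, mem_insert _ _⟩
  intro r hr
  rcases hr with hr | ⟨A, Φ, t, hsw, hfm, ht, rfl⟩
  · subst hr
    exact (norm_add_le x y).trans (add_le_add (norm_le_vv hC hC0 x) (norm_le_vv hC hC0 y))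
  · have : Mat.act (Φ t) (x + y) = Mat.act (Φ t) x + Mat.act (Φ t) y := by
      simp [Mat.act]
    rw [this]
    exact (norm_add_le _ _).trans (add_le_add (mem_traj_le_vv hC hC0 x hsw hfm ht)
      (mem_traj_le_vv hC hC0 y hsw hfm ht))

lemma vv_smul_le (hC : ∀ A Φ : ℝ → Mat n, IsSwitchingLaw M₁ A → IsFundamentalMatrix A Φ →
      ∀ t, 0 ≤ t → ‖Φ t‖ ≤ C) (hC0 : 0 ≤ C) (c : ℝ) (x : Vec n) :
    vv M₁ (c • x) ≤ |c| * vv M₁ x := by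
  apply csSup_le ⟨‖c • x‖, mem_insert _ _⟩
  intro r hr
  have hvx := vv_nonneg hC hC0 x
  rcases hr with hr | ⟨A, Φ, t, hsw, hfm, ht, rfl⟩
  · subst hr
    rw [norm_smul, Real.norm_eq_abs]
    exact mul_le_mul_of_nonneg_left (norm_le_vv hC hC0 x) (abs_nonneg c)
  · have : Mat.act (Φ t) (c • x) = c • Mat.act (Φ t) x := by simp [Mat.act]
    rw [this, norm_smul, Real.norm_eq_abs]
    exact mul_le_mul_of_nonneg_left (mem_traj_le_vv hC hC0 x hsw hfm ht) (abs_nonneg c)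

lemma vv_sub_le (hC : ∀ A Φ : ℝ → Mat n, IsSwitchingLaw M₁ A → IsFundamentalMatrix A Φ →
      ∀ t, 0 ≤ t → ‖Φ t‖ ≤ C) (hC0 : 0 ≤ C) (x y : Vec n) :
    vv M₁ x ≤ vv M₁ y + ((n:ℝ)^2 * C + 1) * ‖x - y‖ := by
  have h1 : vv M₁ x ≤ vv M₁ y + vv M₁ (x - y) := by
    have := vv_add hC hC0 y (x - y)
    simpa using this
  exact h1.trans (add_le_add_right (vv_le hC hC0 (x - y)) _)

variable {M₁ : Set (Mat n)}


/-- The spliced law and solution: concatenating a trajectory `Θ` up to time `h` with a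
trajectory `Ψ` afterwards gives a trajectory of the same switched system. -/
lemma splice {K : ℝ} (hK : ∀ M ∈ M₁, ‖M‖ ≤ K)
    {B Θ Aψ Ψ : ℝ → Mat n} (hsw : IsSwitchingLaw M₁ B) (hfm : IsFundamentalMatrix B Θ)
    (hswψ : IsSwitchingLaw M₁ Aψ) (hfmψ : IsFundamentalMatrix Aψ Ψ)
    {h : ℝ} (hh : 0 ≤ h) :
    IsSwitchingLaw M₁ (fun s => if h ≤ s then Aψ (s - h) else B s) ∧
    IsFundamentalMatrix (fun s => if h ≤ s then Aψ (s - h) else B s)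
      (fun s => if h ≤ s then Ψ (s - h) * Θ h else Θ s) := by
  set A' : ℝ → Mat n := fun s => if h ≤ s then Aψ (s - h) else B s with hA'
  set Θ' : ℝ → Mat n := fun s => if h ≤ s then Ψ (s - h) * Θ h else Θ s with hΘ'
  have hΨ0 : Ψ 0 = 1 := fm_zero hfmψ
  have hmeasA' : Measurable A' := by
    apply Measurable.ite (measurableSet_le measurable_const measurable_id)
    · exact hswψ.1.comp (measurable_id.sub measurable_const)
    · exact hsw.1
  have hswA' : IsSwitchingLaw M₁ A' := by
    refine ⟨hmeasA', fun t ht => ?_⟩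
    by_cases hth : h ≤ t
    · simp only [hA', if_pos hth]
      exact hswψ.2 _ (by linarith)
    · simp only [hA', if_neg hth]
      exact hsw.2 _ ht
  -- bound for A' on positive times
  have hA'bd : ∀ s, 0 ≤ s → ‖A' s‖ ≤ K := by
    intro s hs
    by_cases hsh : h ≤ s
    · simp only [hA', if_pos hsh]; exact hK _ (hswψ.2 _ (by linarith))
    · simp only [hA', if_neg hsh]; exact hK _ (hsw.2 _ hs)
  -- continuity
  have hcont : ContinuousOn Θ' (Ici (0:ℝ)) := by
    have hsub : Ici (0:ℝ) ⊆ Icc 0 h ∪ Ici h := by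
      intro s hs
      rcases le_total s h with h1 | h1
      · exact Or.inl ⟨hs, h1⟩
      · exact Or.inr h1
    apply ContinuousOn.mono _ hsub
    apply continuousOn_union_closed isClosed_Icc isClosed_Ici
    · apply (hfm.1.mono (Icc_subset_Ici_self)).congr
      intro s hs
      by_cases hsh : h ≤ s
      · have hseq : s = h := le_antisymm hs.2 hsh
        subst hseq
        simp only [hΘ', if_pos le_rfl, sub_self, hΨ0, one_mul]
      · simp only [hΘ', if_neg hsh]
    · have hcont2 : ContinuousOn (fun s => Ψ (s - h) * Θ h) (Ici h) := by
        have : ContinuousOn (fun s => Ψ (s - h)) (Ici h) := by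
          apply hfmψ.1.comp ((continuous_id.sub continuous_const).continuousOn)
          intro s hs
          simpa using hs
        exact (mulR (Θ h)).continuous.comp_continuousOn this
      apply hcont2.congr
      intro s hs
      simp only [hΘ', if_pos (mem_Ici.1 hs)]
  refine ⟨hswA', hcont, fun t ht => ?_⟩
  -- integrability of pieces
  have hbox : ∀ a b : ℝ, 0 ≤ a → a ≤ b →
      IntervalIntegrable (fun s => A' s * Θ' s) volume a b := by
    intro a b ha hab
    obtain ⟨Bd, hBd⟩ := (isCompact_Icc (a := a) (b := b)).exists_bound_of_continuousOn
      (hcont.mono (Icc_subset_Ici_self.trans (Ici_subset_Ici.2 ha)))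
    exact intervalIntegrable_mul hmeasA' hab
      (fun s hs => hA'bd s (le_of_lt (lt_of_le_of_lt ha hs.1))) (hcont.mono (by
        intro s hs
        exact le_trans ha hs.1)) hBd
  by_cases hth : h ≤ t
  · -- case t ≥ h
    have e0 : Θ' t = Ψ (t - h) * Θ h := by simp only [hΘ', if_pos hth]
    have hsplit : (∫ s in (0:ℝ)..t, A' s * Θ' s)
        = (∫ s in (0:ℝ)..h, A' s * Θ' s) + ∫ s in h..t, A' s * Θ' s :=
      (intervalIntegral.integral_add_adjacent_intervals (hbox 0 h le_rfl hh)
        (hbox h t hh hth)).symm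
    have hae : ∀ᵐ s : ℝ, s ≠ h := by
      rw [ae_iff]
      have : {s : ℝ | ¬ s ≠ h} = {h} := by ext s; simp
      rw [this]
      exact measure_singleton h
    have e1 : (∫ s in (0:ℝ)..h, A' s * Θ' s) = Θ h - 1 := by
      have : (∫ s in (0:ℝ)..h, A' s * Θ' s) = ∫ s in (0:ℝ)..h, B s * Θ s := by
        apply intervalIntegral.integral_congr_ae
        filter_upwards [hae] with s hs hmem
        rw [uIoc_of_le hh] at hmem
        have hsh : ¬ h ≤ s := by
          rcases lt_or_eq_of_le hmem.2 with h1 | h1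
          · exact not_le.2 h1
          · exact absurd h1 hs
        simp only [hA', hΘ', if_neg hsh]
      rw [this, hfm.2 h hh]; abel
    have hint2 : IntervalIntegrable (fun u => Aψ u * Ψ u) volume 0 (t - h) := by
      obtain ⟨Bd, hBd⟩ := (isCompact_Icc (a := (0:ℝ)) (b := t - h)).exists_bound_of_continuousOn
        (hfmψ.1.mono Icc_subset_Ici_self)
      exact intervalIntegrable_mul hswψ.1 (by linarith)
        (fun s hs => hK _ (hswψ.2 _ (le_of_lt hs.1))) (hfmψ.1.mono Icc_subset_Ici_self) hBd
    have hint3 : IntervalIntegrable (fun s => Aψ (s - h) * Ψ (s - h)) volume h t := by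
      have := hint2.comp_sub_right h
      simpa using this
    have e2 : (∫ s in h..t, A' s * Θ' s) = (Ψ (t - h) - 1) * Θ h := by
      have step1 : (∫ s in h..t, A' s * Θ' s)
          = ∫ s in h..t, (Aψ (s - h) * Ψ (s - h)) * Θ h := by
        apply intervalIntegral.integral_congr_ae
        filter_upwards [hae] with s hs hmem
        rw [uIoc_of_le hth] at hmem
        have hsh : h ≤ s := le_of_lt hmem.1
        simp only [hA', hΘ', if_pos hsh, mul_assoc]
      rw [step1]
      have step2 : (∫ s in h..t, (Aψ (s - h) * Ψ (s - h)) * Θ h)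
          = (∫ s in h..t, Aψ (s - h) * Ψ (s - h)) * Θ h := by
        have := (mulR (Θ h)).intervalIntegral_comp_comm hint3
        exact this
      rw [step2]
      have step3 : (∫ s in h..t, Aψ (s - h) * Ψ (s - h))
          = ∫ u in (0:ℝ)..(t - h), Aψ u * Ψ u := by
        have := intervalIntegral.integral_comp_sub_right (fun u => Aψ u * Ψ u) h
          (a := h) (b := t)
        simpa using this
      rw [step3, ← sub_eq_iff_eq_add'.2 (hfmψ.2 (t - h) (by linarith))]
    rw [e0, hsplit, e1, e2, sub_mul, one_mul]
    abel
  · -- case t < h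
    have e0 : Θ' t = Θ t := by simp only [hΘ', if_neg hth]
    have : (∫ s in (0:ℝ)..t, A' s * Θ' s) = ∫ s in (0:ℝ)..t, B s * Θ s := by
      apply intervalIntegral.integral_congr
      intro s hs
      rw [uIcc_of_le ht] at hs
      have hsh : ¬ h ≤ s := by
        push_neg at hth
        exact not_le.2 (lt_of_le_of_lt hs.2 hth)
      simp only [hA', hΘ', if_neg hsh]
    rw [e0, this, ← hfm.2 t ht]

lemma vv_act_traj_le (hC : ∀ A Φ : ℝ → Mat n, IsSwitchingLaw M₁ A → IsFundamentalMatrix A Φ →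
      ∀ t, 0 ≤ t → ‖Φ t‖ ≤ C) (hC0 : 0 ≤ C) {K : ℝ} (hK : ∀ M ∈ M₁, ‖M‖ ≤ K)
    {B Θ : ℝ → Mat n} (hsw : IsSwitchingLaw M₁ B) (hfm : IsFundamentalMatrix B Θ)
    {h : ℝ} (hh : 0 ≤ h) (x : Vec n) :
    vv M₁ (Mat.act (Θ h) x) ≤ vv M₁ x := by
  apply csSup_le ⟨‖Mat.act (Θ h) x‖, mem_insert _ _⟩
  intro r hr
  rcases hr with hr | ⟨Aψ, Ψ, τ, hswψ, hfmψ, hτ, rfl⟩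
  · subst hr; exact mem_traj_le_vv hC hC0 x hsw hfm hh
  · obtain ⟨hswA', hfmA'⟩ := splice hK hsw hfm hswψ hfmψ hh
    have hact : ‖Mat.act (Ψ τ) (Mat.act (Θ h) x)‖
        = ‖Mat.act ((fun s => if h ≤ s then Ψ (s - h) * Θ h else Θ s) (τ + h)) x‖ := by
      rw [← act_mul]
      simp only [if_pos (by linarith : h ≤ τ + h), add_sub_cancel_right]
    rw [hact]
    exact le_csSup (vset_bdd hC hC0 x) (Or.inr ⟨_, _, τ + h, hswA', hfmA', by linarith, rfl⟩)

lemma vv_ser_le (hC : ∀ A Φ : ℝ → Mat n, IsSwitchingLaw M₁ A → IsFundamentalMatrix A Φ →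
      ∀ t, 0 ≤ t → ‖Φ t‖ ≤ C) (hC0 : 0 ≤ C) {K : ℝ} (hK : ∀ M ∈ M₁, ‖M‖ ≤ K)
    {M : Mat n} (hM : M ∈ M₁) {h : ℝ} (hh : 0 ≤ h) (x : Vec n) :
    vv M₁ (Mat.act (ser M h) x) ≤ vv M₁ x :=
  vv_act_traj_le hC hC0 hK ⟨measurable_const, fun _ _ => hM⟩
    ⟨(ser_continuous M).continuousOn, fun t ht => ser_integral_eq M t ht⟩ hh x

/-- quadratic error constant -/
def Cq (n : ℕ) (C K₁ : ℝ) : ℝ :=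
  ((n:ℝ)^2*C+1) * ((n:ℝ)^2 * (((n:ℝ)*K₁)^2 * Real.exp ((n:ℝ)*K₁)))

lemma Cq_nonneg {C K₁ : ℝ} (hC0 : 0 ≤ C) : 0 ≤ Cq n C K₁ := by
  unfold Cq; positivity

lemma branch (hC : ∀ A Φ : ℝ → Mat n, IsSwitchingLaw M₁ A → IsFundamentalMatrix A Φ →
      ∀ t, 0 ≤ t → ‖Φ t‖ ≤ C) (hC0 : 0 ≤ C)
    {K₁ K₂ : ℝ} (hK₁ : ∀ M ∈ M₁, ‖M‖ ≤ K₁) (hK₁0 : 0 ≤ K₁)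
    {M₂ : Set (Mat n)} (hK₂ : ∀ M ∈ M₂, ‖M‖ ≤ K₂) (hK₂0 : 0 ≤ K₂)
    {ν : ℝ} (hν : ((n:ℝ)^2*C+1) * ((n:ℝ)^2*K₂) ≤ ν)
    {h : ℝ} (h0 : 0 ≤ h) (h1 : h ≤ 1) (hνh : h * ν ≤ 1)
    {N : Mat n} (hN : N ∈ M₁ ∪ (fun A : Mat n => A - ν • (1 : Mat n)) '' M₂)
    (y : Vec n) :
    vv M₁ (y + h • Mat.act N y) ≤ vv M₁ y + h^2 * Cq n C K₁ * ‖y‖ := by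
  rcases hN with hN | ⟨M, hM, rfl⟩
  · -- branch in M₁ : compare with the matrix exponential trajectory
    have hrem : ‖ser N h - 1 - h • N‖ ≤ h^2 * (((n:ℝ)*K₁)^2 * Real.exp ((n:ℝ)*K₁)) := by
      refine (ser_remainder N h h0 h1).trans ?_
      apply mul_le_mul_of_nonneg_left _ (by positivity)
      have hNK : (n:ℝ)*‖N‖ ≤ (n:ℝ)*K₁ :=
        mul_le_mul_of_nonneg_left (hK₁ N hN) (by positivity)
      apply mul_le_mul (pow_le_pow_left₀ (by positivity) hNK 2)
        (Real.exp_le_exp.2 hNK) (by positivity) (by positivity)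
    have hdiff : y + h • Mat.act N y - Mat.act (ser N h) y
        = Mat.act (1 + h • N - ser N h) y := by
      rw [act_sub, act_add, act_smul, act_one]
    calc vv M₁ (y + h • Mat.act N y)
        ≤ vv M₁ (Mat.act (ser N h) y)
          + ((n:ℝ)^2*C+1) * ‖y + h • Mat.act N y - Mat.act (ser N h) y‖ :=
          vv_sub_le hC hC0 _ _
      _ ≤ vv M₁ y + h^2 * Cq n C K₁ * ‖y‖ := by
          apply add_le_add (vv_ser_le hC hC0 hK₁ hN h0 y)
          rw [hdiff]
          calc ((n:ℝ)^2*C+1) * ‖Mat.act (1 + h • N - ser N h) y‖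
              ≤ ((n:ℝ)^2*C+1) * ((n:ℝ)^2 * ‖1 + h • N - ser N h‖ * ‖y‖) := by
                apply mul_le_mul_of_nonneg_left (norm_act_le _ _) (by positivity)
            _ ≤ ((n:ℝ)^2*C+1) * ((n:ℝ)^2 * (h^2 * (((n:ℝ)*K₁)^2 * Real.exp ((n:ℝ)*K₁))) * ‖y‖) := by
                have hsymm : ‖1 + h • N - ser N h‖ = ‖ser N h - 1 - h • N‖ := by
                  rw [← norm_neg]; congr 1; abel
                apply mul_le_mul_of_nonneg_left _ (by positivity)
                apply mul_le_mul_of_nonneg_right _ (norm_nonneg _)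
                apply mul_le_mul_of_nonneg_left _ (by positivity)
                rw [hsymm]; exact hrem
            _ = h^2 * Cq n C K₁ * ‖y‖ := by unfold Cq; ring
  · -- shifted branch
    have hact : Mat.act (M - ν • (1 : Mat n)) y = Mat.act M y - ν • y := by
      rw [act_sub, act_smul, act_one]
    have hrw : y + h • (Mat.act M y - ν • y) = (1 - h*ν) • y + h • Mat.act M y := by
      module
    rw [hact, hrw]
    have hvMy : vv M₁ (Mat.act M y) ≤ ((n:ℝ)^2*C+1) * ((n:ℝ)^2 * K₂ * ‖y‖) := by
      refine (vv_le hC hC0 _).trans ?_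
      apply mul_le_mul_of_nonneg_left _ (by positivity)
      refine (norm_act_le M y).trans ?_
      apply mul_le_mul_of_nonneg_right
        (mul_le_mul_of_nonneg_left (hK₂ M hM) (by positivity)) (norm_nonneg _)
    have h1ν : 0 ≤ 1 - h * ν := by linarith
    have hy := norm_le_vv hC hC0 y
    calc vv M₁ ((1 - h*ν) • y + h • Mat.act M y)
        ≤ vv M₁ ((1 - h*ν) • y) + vv M₁ (h • Mat.act M y) := vv_add hC hC0 _ _
      _ ≤ (1 - h*ν) * vv M₁ y + h * (((n:ℝ)^2*C+1) * ((n:ℝ)^2 * K₂ * ‖y‖)) := by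
          apply add_le_add
          · refine (vv_smul_le hC hC0 _ _).trans ?_
            rw [abs_of_nonneg h1ν]
          · refine (vv_smul_le hC hC0 _ _).trans ?_
            rw [abs_of_nonneg h0]
            exact mul_le_mul_of_nonneg_left hvMy h0
      _ ≤ vv M₁ y + h^2 * Cq n C K₁ * ‖y‖ := by
          have hCq : 0 ≤ h^2 * Cq n C K₁ * ‖y‖ := by
            have := Cq_nonneg (n := n) (K₁ := K₁) hC0
            positivity
          have hkey : h * (((n:ℝ)^2*C+1) * ((n:ℝ)^2 * K₂ * ‖y‖)) ≤ h * ν * vv M₁ y := by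
            have h2 : ((n:ℝ)^2*C+1) * ((n:ℝ)^2*K₂) * ‖y‖ ≤ ν * vv M₁ y := by
              have hb0 : 0 ≤ ((n:ℝ)^2*C+1) * ((n:ℝ)^2*K₂) := mul_nonneg (by positivity) (mul_nonneg (by positivity) hK₂0)
              calc ((n:ℝ)^2*C+1) * ((n:ℝ)^2*K₂) * ‖y‖ ≤ ν * ‖y‖ :=
                    mul_le_mul_of_nonneg_right hν (norm_nonneg _)
                _ ≤ ν * vv M₁ y := by
                    apply mul_le_mul_of_nonneg_left hy (le_trans hb0 hν)
            calc h * (((n:ℝ)^2*C+1) * ((n:ℝ)^2 * K₂ * ‖y‖))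
                = h * (((n:ℝ)^2*C+1) * ((n:ℝ)^2*K₂) * ‖y‖) := by ring
              _ ≤ h * (ν * vv M₁ y) := mul_le_mul_of_nonneg_left h2 h0
              _ = h * ν * vv M₁ y := by ring
          nlinarith [vv_nonneg hC hC0 y]

/-- the action on a fixed vector, as a continuous linear map in the matrix -/
def actL (y : Vec n) : Mat n →L[ℝ] Vec n :=
  LinearMap.toContinuousLinearMap
    (LinearMap.flip (Matrix.toEuclideanLin :
      Mat n ≃ₗ[ℝ] (Vec n →ₗ[ℝ] Vec n)).toLinearMap y)

@[simp] lemma actL_apply (y : Vec n) (M : Mat n) : actL y M = Mat.act M y := rfl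

lemma intervalIntegrable_law {A : ℝ → Mat n} (hA : Measurable A) {a b K : ℝ}
    (hab : a ≤ b) (hK : ∀ s ∈ Ioc a b, ‖A s‖ ≤ K) :
    IntervalIntegrable A volume a b := by
  rw [intervalIntegrable_iff_integrableOn_Ioc_of_le hab]
  exact ⟨hA.aestronglyMeasurable,
    HasFiniteIntegral.restrict_of_bounded (C := K) measure_Ioc_lt_top
      ((ae_restrict_iff' measurableSet_Ioc).2 (Filter.Eventually.of_forall hK))⟩

lemma vv_lipschitz (hC : ∀ A Φ : ℝ → Mat n, IsSwitchingLaw M₁ A → IsFundamentalMatrix A Φ →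
      ∀ t, 0 ≤ t → ‖Φ t‖ ≤ C) (hC0 : 0 ≤ C) :
    Continuous (vv M₁) := by
  have key : ∀ x y : Vec n, vv M₁ x - vv M₁ y ≤ ((n:ℝ)^2*C+1) * ‖x - y‖ := by
    intro x y
    have := vv_sub_le hC hC0 x y
    linarith
  have hlip : LipschitzWith (Real.toNNReal ((n:ℝ)^2*C+1)) (vv M₁) := by
    apply LipschitzWith.of_dist_le_mul
    intro x y
    rw [Real.dist_eq, Real.coe_toNNReal _ (by positivity), dist_eq_norm]
    rw [abs_sub_le_iff]
    constructor
    · exact key x y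
    · rw [← norm_sub_rev]
      exact key y x
  exact hlip.continuous

lemma vv_convexOn (hC : ∀ A Φ : ℝ → Mat n, IsSwitchingLaw M₁ A → IsFundamentalMatrix A Φ →
      ∀ t, 0 ≤ t → ‖Φ t‖ ≤ C) (hC0 : 0 ≤ C) :
    ConvexOn ℝ univ (vv M₁) := by
  refine ⟨convex_univ, fun x _ y _ a b ha hb hab => ?_⟩
  calc vv M₁ (a • x + b • y) ≤ vv M₁ (a • x) + vv M₁ (b • y) := vv_add hC hC0 _ _
    _ ≤ |a| * vv M₁ x + |b| * vv M₁ y :=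
        add_le_add (vv_smul_le hC hC0 _ _) (vv_smul_le hC hC0 _ _)
    _ = a * vv M₁ x + b * vv M₁ y := by rw [abs_of_nonneg ha, abs_of_nonneg hb]

/-- the constant in the one-step estimate -/
def Dstep (n : ℕ) (C K₁ BT Kν : ℝ) : ℝ :=
  Cq n C K₁ * ((n:ℝ)^2*BT) + ((n:ℝ)^2*C+1) * (n:ℝ)^2 * ((n:ℝ)^2*Kν^2*BT)

lemma step (hC : ∀ A Φ : ℝ → Mat n, IsSwitchingLaw M₁ A → IsFundamentalMatrix A Φ →
      ∀ t, 0 ≤ t → ‖Φ t‖ ≤ C) (hC0 : 0 ≤ C)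
    {K₁ K₂ : ℝ} (hK₁ : ∀ M ∈ M₁, ‖M‖ ≤ K₁) (hK₁0 : 0 ≤ K₁)
    {M₂ : Set (Mat n)} (hK₂ : ∀ M ∈ M₂, ‖M‖ ≤ K₂) (hK₂0 : 0 ≤ K₂)
    {ν : ℝ} (hν : ((n:ℝ)^2*C+1) * ((n:ℝ)^2*K₂) ≤ ν)
    {A Φ : ℝ → Mat n} (hsw : IsSwitchingLaw (M₁ ∪ (fun A : Mat n => A - ν • (1 : Mat n)) '' M₂) A)
    (hfm : IsFundamentalMatrix A Φ)
    {Kν : ℝ} (hKν : ∀ s, 0 ≤ s → ‖A s‖ ≤ Kν) (hKν0 : 0 ≤ Kν)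
    {T BT : ℝ} (hBT : ∀ s ∈ Icc (0:ℝ) T, ‖Φ s‖ ≤ BT) (hBT0 : 0 ≤ BT)
    {t₀ h : ℝ} (ht₀ : 0 ≤ t₀) (hh : 0 < h) (hsum : t₀ + h ≤ T) (h1 : h ≤ 1) (hνh : h * ν ≤ 1)
    (x : Vec n) :
    vv M₁ (Mat.act (Φ (t₀+h)) x) ≤ vv M₁ (Mat.act (Φ t₀) x)
      + h^2 * Dstep n C K₁ BT Kν * ‖x‖ := by
  set C₁ : ℝ := (n:ℝ)^2*C+1 with hC₁def
  set y : Vec n := Mat.act (Φ t₀) x with hy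
  have hT0 : (0:ℝ) ≤ T := by linarith
  -- basic integrability on subintervals of [0, T]
  have hΦT : ContinuousOn Φ (Icc 0 T) := hfm.1.mono Icc_subset_Ici_self
  have hAΦint : ∀ a b : ℝ, 0 ≤ a → a ≤ b → b ≤ T →
      IntervalIntegrable (fun s => A s * Φ s) volume a b := by
    intro a b ha hab hbT
    exact intervalIntegrable_mul hsw.1 hab (fun s hs => hKν s (le_of_lt (lt_of_le_of_lt ha hs.1)))
      (hΦT.mono (fun s hs => ⟨le_trans ha hs.1, le_trans hs.2 hbT⟩))
      (fun s hs => hBT s ⟨le_trans ha hs.1, le_trans hs.2 hbT⟩)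
  -- the increment identity
  have hincr : ∀ s, t₀ ≤ s → s ≤ T →
      Φ s - Φ t₀ = ∫ u in t₀..s, A u * Φ u := by
    intro s hs hsT
    have h1' := hfm.2 t₀ ht₀
    have h2' := hfm.2 s (le_trans ht₀ hs)
    have hadd : (∫ u in (0:ℝ)..t₀, A u * Φ u) + (∫ u in t₀..s, A u * Φ u)
        = ∫ u in (0:ℝ)..s, A u * Φ u :=
      intervalIntegral.integral_add_adjacent_intervals
        (hAΦint 0 t₀ le_rfl ht₀ (by linarith)) (hAΦint t₀ s ht₀ hs hsT)
    rw [h1', h2', ← hadd]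
    abel
  -- Lipschitz-type bound on [t₀, t₀+h]
  have hlip : ∀ s, t₀ ≤ s → s ≤ t₀ + h →
      ‖Φ s - Φ t₀‖ ≤ (n:ℝ) * Kν * BT * h := by
    intro s hs hsh
    rw [hincr s hs (by linarith)]
    have hbd : ∀ u ∈ Set.uIoc t₀ s, ‖A u * Φ u‖ ≤ (n:ℝ) * Kν * BT := by
      intro u hu
      rw [uIoc_of_le hs] at hu
      have hu0 : 0 ≤ u := le_trans ht₀ (le_of_lt hu.1)
      have huT : u ≤ T := by
        have := hu.2; linarith
      calc ‖A u * Φ u‖ ≤ (n:ℝ) * ‖A u‖ * ‖Φ u‖ := norm_mul_le' _ _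
        _ ≤ (n:ℝ) * Kν * BT := by
            have g1 := hKν u hu0
            have g2 := hBT u ⟨hu0, huT⟩
            have : (n:ℝ) * ‖A u‖ ≤ (n:ℝ) * Kν := by
              apply mul_le_mul_of_nonneg_left g1 (by positivity)
            exact mul_le_mul this g2 (norm_nonneg _) (by positivity)
    calc ‖∫ u in t₀..s, A u * Φ u‖ ≤ (n:ℝ) * Kν * BT * |s - t₀| :=
          intervalIntegral.norm_integral_le_of_norm_le_const hbd
      _ ≤ (n:ℝ) * Kν * BT * h := by
          apply mul_le_mul_of_nonneg_left _ (by positivity)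
          rw [abs_of_nonneg (by linarith)]
          linarith
  -- error term
  set J : Mat n := ∫ u in t₀..(t₀+h), A u with hJ
  have hAint : IntervalIntegrable A volume t₀ (t₀+h) :=
    intervalIntegrable_law hsw.1 (by linarith)
      (fun s hs => hKν s (le_of_lt (lt_of_le_of_lt ht₀ hs.1)))
  have herr : ‖(∫ u in t₀..(t₀+h), A u * Φ u) - J * Φ t₀‖
      ≤ h^2 * ((n:ℝ)^2 * Kν^2 * BT) := by
    have hmulint : IntervalIntegrable (fun u => A u * Φ t₀) volume t₀ (t₀+h) := by
      rw [intervalIntegrable_iff] at hAint ⊢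
      have := (mulR (Φ t₀)).integrable_comp hAint
      exact this
    have hJ' : (∫ u in t₀..(t₀+h), A u * Φ t₀) = J * Φ t₀ := by
      have := (mulR (Φ t₀)).intervalIntegral_comp_comm hAint
      exact this
    rw [← hJ']
    rw [← intervalIntegral.integral_sub (hAΦint t₀ (t₀+h) ht₀ (by linarith) hsum) hmulint]
    have hbd : ∀ u ∈ Set.uIoc t₀ (t₀+h), ‖A u * Φ u - A u * Φ t₀‖
        ≤ (n:ℝ) * Kν * ((n:ℝ) * Kν * BT * h) := by
      intro u hu
      rw [uIoc_of_le (by linarith : t₀ ≤ t₀ + h)] at hu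
      have hu0 : 0 ≤ u := le_trans ht₀ (le_of_lt hu.1)
      rw [← mul_sub]
      calc ‖A u * (Φ u - Φ t₀)‖ ≤ (n:ℝ) * ‖A u‖ * ‖Φ u - Φ t₀‖ := norm_mul_le' _ _
        _ ≤ (n:ℝ) * Kν * ((n:ℝ) * Kν * BT * h) := by
            have g1 := hKν u hu0
            have g2 := hlip u (le_of_lt hu.1) hu.2
            have e1 : (n:ℝ) * ‖A u‖ ≤ (n:ℝ) * Kν := by
              apply mul_le_mul_of_nonneg_left g1 (by positivity)
            exact mul_le_mul e1 g2 (norm_nonneg _) (by positivity)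
    calc ‖∫ u in t₀..(t₀+h), (A u * Φ u - A u * Φ t₀)‖
        ≤ (n:ℝ) * Kν * ((n:ℝ) * Kν * BT * h) * |t₀ + h - t₀| :=
          intervalIntegral.norm_integral_le_of_norm_le_const hbd
      _ = h^2 * ((n:ℝ)^2 * Kν^2 * BT) := by
          rw [abs_of_nonneg (by linarith : (0:ℝ) ≤ t₀ + h - t₀)]
          ring_nf
  -- decomposition of the new state
  have hdecomp : Mat.act (Φ (t₀+h)) x
      = (y + Mat.act J y) + Mat.act ((∫ u in t₀..(t₀+h), A u * Φ u) - J * Φ t₀) x := by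
    have e1 : Φ (t₀+h) = Φ t₀ + ∫ u in t₀..(t₀+h), A u * Φ u := by
      have := hincr (t₀+h) (by linarith) hsum
      rw [← this]; abel
    rw [e1, act_add, act_sub, act_mul, ← hy]
    abel
  -- Jensen's inequality part
  set μ : Measure ℝ := volume.restrict (Ioc t₀ (t₀+h)) with hμ
  haveI : IsFiniteMeasure μ := by
    constructor
    rw [hμ, Measure.restrict_apply_univ]
    exact measure_Ioc_lt_top
  haveI : NeZero μ := by
    constructor
    rw [hμ, Ne, Measure.restrict_eq_zero]
    simp only [Real.volume_Ioc]
    intro hcon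
    rw [ENNReal.ofReal_eq_zero] at hcon
    linarith
  have hμuniv : μ.real univ = h := by
    rw [measureReal_def, hμ, Measure.restrict_apply_univ, Real.volume_Ioc]
    rw [ENNReal.toReal_ofReal (by linarith)]
    ring
  set f : ℝ → Vec n := fun s => y + h • Mat.act (A s) y with hf
  have hfmeas : AEStronglyMeasurable f μ := by
    apply AEStronglyMeasurable.const_add
    have : Continuous (actL (n := n) y) := (actL y).continuous
    exact (this.comp_aestronglyMeasurable hsw.1.aestronglyMeasurable).const_smul h
  have hfbound : ∀ s ∈ Ioc t₀ (t₀+h), ‖f s‖ ≤ ‖y‖ + h * ((n:ℝ)^2 * Kν * ‖y‖) := by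
    intro s hs
    have hs0 : 0 ≤ s := le_trans ht₀ (le_of_lt hs.1)
    calc ‖f s‖ ≤ ‖y‖ + ‖h • Mat.act (A s) y‖ := norm_add_le _ _
      _ ≤ ‖y‖ + h * ((n:ℝ)^2 * Kν * ‖y‖) := by
          apply add_le_add_right
          rw [norm_smul, Real.norm_eq_abs, abs_of_nonneg (le_of_lt hh)]
          apply mul_le_mul_of_nonneg_left _ (le_of_lt hh)
          refine (norm_act_le _ _).trans ?_
          apply mul_le_mul_of_nonneg_right _ (norm_nonneg _)
          exact mul_le_mul_of_nonneg_left (hKν s hs0) (by positivity)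
  have hfint : Integrable f μ := by
    refine ⟨hfmeas, HasFiniteIntegral.restrict_of_bounded
      (C := ‖y‖ + h * ((n:ℝ)^2 * Kν * ‖y‖)) measure_Ioc_lt_top ?_⟩
    exact (ae_restrict_iff' measurableSet_Ioc).2 (Filter.Eventually.of_forall hfbound)
  have hvvcont := vv_lipschitz hC hC0
  have hgint : Integrable (fun s => vv M₁ (f s)) μ := by
    refine ⟨(hvvcont.comp_aestronglyMeasurable hfmeas), HasFiniteIntegral.restrict_of_bounded
      (C := C₁ * (‖y‖ + h * ((n:ℝ)^2 * Kν * ‖y‖))) measure_Ioc_lt_top ?_⟩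
    apply (ae_restrict_iff' measurableSet_Ioc).2 (Filter.Eventually.of_forall ?_)
    intro s hs
    rw [Real.norm_eq_abs, abs_of_nonneg (vv_nonneg hC hC0 _)]
    refine (vv_le hC hC0 _).trans ?_
    exact mul_le_mul_of_nonneg_left (hfbound s hs) (by positivity)
  have hAμint : Integrable A μ := by
    have := hAint
    rwa [intervalIntegrable_iff_integrableOn_Ioc_of_le (by linarith : t₀ ≤ t₀ + h)] at this
  have hactint : Integrable (fun s => Mat.act (A s) y) μ := by
    have := (actL (n := n) y).integrable_comp hAμint
    exact this
  have hintJ : (∫ s, A s ∂μ) = J := by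
    rw [hJ, intervalIntegral.integral_of_le (by linarith : t₀ ≤ t₀ + h)]
  have havg : ⨍ s, f s ∂μ = y + Mat.act J y := by
    rw [average_eq]
    rw [hf]
    have hsm : Integrable (fun s => h • Mat.act (A s) y) μ := by
      exact hactint.smul h
    rw [integral_add (integrable_const y) hsm]
    rw [integral_const, integral_smul]
    have hcomp : (∫ s, Mat.act (A s) y ∂μ) = Mat.act J y := by
      have := (actL (n := n) y).integral_comp_comm hAμint
      rw [← hintJ]
      exact this
    rw [hcomp, hμuniv, smul_add, smul_smul, smul_smul]
    rw [inv_mul_cancel₀ (ne_of_gt hh), one_smul, one_smul]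
  -- pointwise bound and Jensen
  have hpoint : ∀ s ∈ Ioc t₀ (t₀+h),
      vv M₁ (f s) ≤ vv M₁ y + h^2 * Cq n C K₁ * ‖y‖ := by
    intro s hs
    have hs0 : 0 ≤ s := le_trans ht₀ (le_of_lt hs.1)
    exact branch hC hC0 hK₁ hK₁0 hK₂ hK₂0 hν (le_of_lt hh) h1 hνh (hsw.2 s hs0) y
  have hjensen : vv M₁ (y + Mat.act J y) ≤ ⨍ s, vv M₁ (f s) ∂μ := by
    rw [← havg]
    exact (vv_convexOn hC hC0).map_average_le hvvcont.continuousOn isClosed_univ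
      (Filter.Eventually.of_forall (fun s => mem_univ _)) hfint hgint
  have havgle : (⨍ s, vv M₁ (f s) ∂μ) ≤ vv M₁ y + h^2 * Cq n C K₁ * ‖y‖ := by
    rw [average_eq, hμuniv]
    have hintle : (∫ s, vv M₁ (f s) ∂μ) ≤ (vv M₁ y + h^2 * Cq n C K₁ * ‖y‖) * h := by
      have hconst : (∫ _ : ℝ, (vv M₁ y + h^2 * Cq n C K₁ * ‖y‖) ∂μ)
          = (vv M₁ y + h^2 * Cq n C K₁ * ‖y‖) * h := by
        rw [integral_const, hμuniv, smul_eq_mul]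
        ring
      rw [← hconst]
      apply integral_mono_ae hgint (integrable_const _)
      exact (ae_restrict_iff' measurableSet_Ioc).2 (Filter.Eventually.of_forall hpoint)
    calc h⁻¹ • ∫ s, vv M₁ (f s) ∂μ ≤ h⁻¹ • ((vv M₁ y + h^2 * Cq n C K₁ * ‖y‖) * h) := by
          apply smul_le_smul_of_nonneg_left hintle (by positivity)
      _ = vv M₁ y + h^2 * Cq n C K₁ * ‖y‖ := by
          rw [smul_eq_mul]
          field_simp
  -- combine everything
  have hcomb : vv M₁ (Mat.act (Φ (t₀+h)) x)
      ≤ vv M₁ (y + Mat.act J y)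
        + C₁ * ‖Mat.act ((∫ u in t₀..(t₀+h), A u * Φ u) - J * Φ t₀) x‖ := by
    rw [hdecomp]
    have := vv_sub_le hC hC0 ((y + Mat.act J y)
      + Mat.act ((∫ u in t₀..(t₀+h), A u * Φ u) - J * Φ t₀) x) (y + Mat.act J y)
    simpa using this
  have hy_bd : ‖y‖ ≤ (n:ℝ)^2 * BT * ‖x‖ := by
    rw [hy]
    refine (norm_act_le _ _).trans ?_
    apply mul_le_mul_of_nonneg_right _ (norm_nonneg _)
    exact mul_le_mul_of_nonneg_left (hBT t₀ ⟨ht₀, by linarith⟩) (by positivity)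
  have herr2 : C₁ * ‖Mat.act ((∫ u in t₀..(t₀+h), A u * Φ u) - J * Φ t₀) x‖
      ≤ C₁ * ((n:ℝ)^2 * (h^2 * ((n:ℝ)^2 * Kν^2 * BT)) * ‖x‖) := by
    apply mul_le_mul_of_nonneg_left _ (by positivity)
    refine (norm_act_le _ _).trans ?_
    apply mul_le_mul_of_nonneg_right _ (norm_nonneg _)
    exact mul_le_mul_of_nonneg_left herr (by positivity)
  calc vv M₁ (Mat.act (Φ (t₀+h)) x)
      ≤ vv M₁ (y + Mat.act J y)
        + C₁ * ‖Mat.act ((∫ u in t₀..(t₀+h), A u * Φ u) - J * Φ t₀) x‖ := hcomb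
    _ ≤ (vv M₁ y + h^2 * Cq n C K₁ * ‖y‖)
        + C₁ * ((n:ℝ)^2 * (h^2 * ((n:ℝ)^2 * Kν^2 * BT)) * ‖x‖) :=
        add_le_add (hjensen.trans havgle) herr2
    _ ≤ vv M₁ y + h^2 * Dstep n C K₁ BT Kν * ‖x‖ := by
        have hCq0 : 0 ≤ Cq n C K₁ := Cq_nonneg hC0
        have : h^2 * Cq n C K₁ * ‖y‖ ≤ h^2 * Cq n C K₁ * ((n:ℝ)^2 * BT * ‖x‖) := by
          apply mul_le_mul_of_nonneg_left hy_bd (by positivity)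
        unfold Dstep
        simp only [hC₁def] at *
        linarith [this]

lemma entry_eq_act (M : Mat n) (i j : Fin n) :
    M i j = Mat.act M (EuclideanSpace.single j 1) i := by
  rw [act_apply]
  simp [EuclideanSpace.single_apply]

end Aux

/-- Let `𝓜₁, 𝓜₂` be bounded sets of matrices with `(Σ_𝓜₁)` uniformly
stable. Then, for `ν > 0` large enough, the switched system associated with
`𝓜₁ ∪ { M - ν Id : M ∈ 𝓜₂ }` is uniformly stable. -/

theorem uniformlyStable_union_shifted {n : ℕ} (hn : 1 ≤ n)
    (M₁ M₂ : Set (Mat n)) (h₁ : Bornology.IsBounded M₁) (h₂ : Bornology.IsBounded M₂)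
    (hstab : UniformlyStable M₁) :
    ∃ ν₀ > (0:ℝ), ∀ ν : ℝ, ν₀ ≤ ν →
      UniformlyStable (M₁ ∪ (fun A : Mat n => A - ν • (1 : Mat n)) '' M₂) := by
  classical
  obtain ⟨C, hCpos, hC⟩ := hstab
  have hC0 : 0 ≤ C := le_of_lt hCpos
  obtain ⟨K₁0, hK₁0'⟩ := h₁.exists_norm_le
  obtain ⟨K₂0, hK₂0'⟩ := h₂.exists_norm_le
  set K₁ : ℝ := max K₁0 0 with hK₁def
  set K₂ : ℝ := max K₂0 0 with hK₂def
  have hK₁ : ∀ M ∈ M₁, ‖M‖ ≤ K₁ := fun M hM => (hK₁0' M hM).trans (le_max_left _ _)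
  have hK₂ : ∀ M ∈ M₂, ‖M‖ ≤ K₂ := fun M hM => (hK₂0' M hM).trans (le_max_left _ _)
  have hK₁nn : 0 ≤ K₁ := le_max_right _ _
  have hK₂nn : 0 ≤ K₂ := le_max_right _ _
  set C₁ : ℝ := (n:ℝ)^2*C+1 with hC₁def
  have hC₁pos : 0 < C₁ := by positivity
  refine ⟨C₁ * ((n:ℝ)^2*K₂) + 1, by positivity, ?_⟩
  intro ν hν
  have hνK : C₁ * ((n:ℝ)^2*K₂) ≤ ν := by linarith
  have hνpos : 0 < ν := by
    have : (0:ℝ) ≤ C₁ * ((n:ℝ)^2*K₂) := by positivity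
    linarith
  refine ⟨C₁, hC₁pos, ?_⟩
  intro A Φ hsw hfm t ht
  -- bound on the law
  set Kν : ℝ := K₁ + K₂ + ν with hKνdef
  have hKν0 : 0 ≤ Kν := by positivity
  have hKν : ∀ s, 0 ≤ s → ‖A s‖ ≤ Kν := by
    intro s hs
    rcases hsw.2 s hs with hA | ⟨M, hM, hAe⟩
    · have := hK₁ _ hA
      rw [hKνdef]; linarith
    · rw [← hAe]
      calc ‖M - ν • (1 : Mat n)‖ ≤ ‖M‖ + ‖ν • (1 : Mat n)‖ := norm_sub_le _ _
        _ ≤ K₂ + ν := by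
            have h1 : ‖ν • (1 : Mat n)‖ = |ν| * ‖(1 : Mat n)‖ := by
              rw [norm_smul, Real.norm_eq_abs]
            have h2 : ‖ν • (1 : Mat n)‖ ≤ ν := by
              rw [h1, abs_of_pos hνpos]
              calc ν * ‖(1:Mat n)‖ ≤ ν * 1 :=
                    mul_le_mul_of_nonneg_left Aux.norm_one_le (le_of_lt hνpos)
                _ = ν := mul_one ν
            have h3 := hK₂ M hM
            linarith
        _ ≤ Kν := by rw [hKνdef]; linarith
  -- the key claim
  have claim : ∀ x : Vec n, Aux.vv M₁ (Mat.act (Φ t) x) ≤ Aux.vv M₁ x := by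
    intro x
    rcases eq_or_lt_of_le ht with rfl | hT
    · rw [Aux.fm_zero hfm, Aux.act_one]
    · -- positive time; bound on the trajectory
      obtain ⟨BT, hBT⟩ := (isCompact_Icc (a := (0:ℝ)) (b := t)).exists_bound_of_continuousOn
        (hfm.1.mono Icc_subset_Ici_self)
      have hBT0 : 0 ≤ BT := le_trans (norm_nonneg _) (hBT 0 ⟨le_rfl, ht⟩)
      set D : ℝ := Aux.Dstep n C K₁ BT Kν with hDdef
      have hD0 : 0 ≤ D := by
        rw [hDdef]
        unfold Aux.Dstep
        have := Aux.Cq_nonneg (n := n) (K₁ := K₁) hC0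
        positivity
      -- N-step iteration
      have iter : ∀ N : ℕ, 1 ≤ N → t ≤ N → t * ν ≤ N →
          Aux.vv M₁ (Mat.act (Φ t) x) ≤ Aux.vv M₁ x + (t^2 * D * ‖x‖) / N := by
        intro N hN1 hNt hNtν
        have hNpos : (0:ℝ) < N := by exact_mod_cast hN1
        set h : ℝ := t / N with hhdef
        have hh : 0 < h := by positivity
        have hh1 : h ≤ 1 := by
          rw [hhdef, div_le_one hNpos]; exact hNt
        have hhν : h * ν ≤ 1 := by
          rw [hhdef, div_mul_eq_mul_div, div_le_one hNpos]; exact hNtν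
        have key : ∀ k : ℕ, k ≤ N →
            Aux.vv M₁ (Mat.act (Φ (k * h)) x) ≤ Aux.vv M₁ x + k * (h^2 * D * ‖x‖) := by
          intro k
          induction k with
          | zero =>
            intro _
            norm_num
            rw [Aux.fm_zero hfm, Aux.act_one]
          | succ k ih =>
            intro hk1
            have hk : k ≤ N := le_of_lt (Nat.lt_of_succ_le hk1)
            have hkh0 : 0 ≤ (k:ℝ) * h := by positivity
            have hsum : (k:ℝ) * h + h ≤ t := by
              have hNh : (N:ℝ) * h = t := by
                rw [hhdef]; field_simp
              have : ((k:ℝ) + 1) * h ≤ (N:ℝ) * h := by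
                apply mul_le_mul_of_nonneg_right _ (le_of_lt hh)
                exact_mod_cast hk1
              linarith [this, hNh.ge, hNh.le]
            have hstep := Aux.step hC hC0 hK₁ hK₁nn hK₂ hK₂nn hνK hsw hfm hKν hKν0
              (T := t) (BT := BT) hBT hBT0 hkh0 hh hsum hh1 hhν x
            have hcast : ((k+1 : ℕ):ℝ) * h = (k:ℝ) * h + h := by push_cast; ring
            rw [hcast]
            calc Aux.vv M₁ (Mat.act (Φ ((k:ℝ) * h + h)) x)
                ≤ Aux.vv M₁ (Mat.act (Φ ((k:ℝ) * h)) x) + h^2 * D * ‖x‖ := hstep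
              _ ≤ Aux.vv M₁ x + k * (h^2 * D * ‖x‖) + h^2 * D * ‖x‖ :=
                  add_le_add_left (ih hk) _
              _ = Aux.vv M₁ x + ((k+1:ℕ):ℝ) * (h^2 * D * ‖x‖) := by push_cast; ring
        have hfin := key N le_rfl
        have hNh : (N:ℝ) * h = t := by rw [hhdef]; field_simp
        rw [hNh] at hfin
        refine hfin.trans (le_of_eq ?_)
        rw [hhdef]
        field_simp
      -- pass to the limit
      have hlim : Filter.Tendsto (fun N : ℕ => Aux.vv M₁ x + (t^2 * D * ‖x‖) / N)
          Filter.atTop (nhds (Aux.vv M₁ x)) := by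
        have := tendsto_const_div_atTop_nhds_zero_nat (t^2 * D * ‖x‖)
        have h2 := Filter.Tendsto.add (tendsto_const_nhds
          (x := Aux.vv M₁ x) (f := Filter.atTop (α := ℕ))) this
        simpa using h2
      apply ge_of_tendsto hlim
      rw [Filter.eventually_atTop]
      refine ⟨⌈t⌉₊ + ⌈t * ν⌉₊ + 1, fun N hN => ?_⟩
      apply iter N (by omega)
      · calc t ≤ (⌈t⌉₊ : ℝ) := Nat.le_ceil t
          _ ≤ N := by exact_mod_cast le_trans (by omega) hN
      · calc t * ν ≤ (⌈t * ν⌉₊ : ℝ) := Nat.le_ceil _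
          _ ≤ N := by exact_mod_cast le_trans (by omega) hN
  -- conclude the matrix bound
  apply (Matrix.norm_le_iff (le_of_lt hC₁pos)).2
  intro i j
  have e1 : (Φ t) i j = Mat.act (Φ t) (EuclideanSpace.single j 1) i :=
    Aux.entry_eq_act _ i j
  calc ‖(Φ t) i j‖ = ‖Mat.act (Φ t) (EuclideanSpace.single j 1) i‖ := by rw [e1]
    _ ≤ ‖Mat.act (Φ t) (EuclideanSpace.single j 1)‖ := Aux.norm_coord _ i
    _ ≤ Aux.vv M₁ (Mat.act (Φ t) (EuclideanSpace.single j 1)) :=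
        Aux.norm_le_vv hC hC0 _
    _ ≤ Aux.vv M₁ (EuclideanSpace.single j 1) := claim _
    _ ≤ C₁ * ‖(EuclideanSpace.single j (1:ℝ))‖ := Aux.vv_le hC hC0 _
    _ = C₁ := by
        rw [EuclideanSpace.norm_single]
        simp


end
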